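/- arXiv:2106.02667 — 2 statements merged into one kernel-verified Lean document; each statement's English description precedes it below -/
import Mathlib

section
/- Let p, p' : E → B be continuous maps that are homotopic to one another. Then for every natural number k, secat(p) ≤ k if and only if secat(p') ≤ k. -/
open unitInterval

/-- The inclusion of a subset, as a continuous map. -/
def setIncl {B : Type*} [TopologicalSpace B] (U : Set B) : C(U, B) :=
  ⟨Subtype.val, continuous_subtype_val⟩

/-- `secat p ≤ k`: the base admits a cover by `k + 1` open sets, each admitting a local
homotopy section of `p`. -/
def SecatLE {E B : Type*} [TopologicalSpace E] [TopologicalSpace B] (p : C(E, B)) (k : ℕ) :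
    Prop :=
  ∃ U : Fin (k + 1) → Set B,
    (∀ i, IsOpen (U i)) ∧ (⋃ i, U i) = Set.univ ∧
      ∀ i, ∃ s : C(U i, E), (p.comp s).Homotopic (setIncl (U i))

lemma secatLE_mono_homotopic {E B : Type*} [TopologicalSpace E] [TopologicalSpace B]
    (p p' : C(E, B)) (h : p.Homotopic p') (k : ℕ) (hp : SecatLE p k) : SecatLE p' k := by
  obtain ⟨U, hopen, hcov, hsec⟩ := hp
  refine ⟨U, hopen, hcov, fun i => ?_⟩
  obtain ⟨s, hs⟩ := hsec i
  exact ⟨s, ((ContinuousMap.Homotopic.comp h.symm (ContinuousMap.Homotopic.refl s)).trans hs)⟩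

/-- Homotopic maps have the same sectional category. -/
theorem secatLE_congr_homotopic {E B : Type*} [TopologicalSpace E] [TopologicalSpace B]
    (p p' : C(E, B)) (h : p.Homotopic p') (k : ℕ) :
    SecatLE p k ↔ SecatLE p' k :=
  ⟨secatLE_mono_homotopic p p' h k, secatLE_mono_homotopic p' p h.symm k⟩
end

section
/- Let p : E → B be a continuous map and let d : E → E ×_B E be the diagonal map d(e) = (e,e). Then for every natural number k, secat(Π) ≤ k if and only if secat(d) ≤ k; that is, the parametrised topological complexity TC[p : E → B] equals the sectional category of the diagonal map d : E → E ×_B E. -/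
open unitInterval

/-- The space `E^I_B` of paths in `E` lying in a single fibre of `p`
(topologised as a subspace of `C(I, E)` with the compact-open topology). -/
abbrev FibrewisePath {E B : Type*} [TopologicalSpace E] [TopologicalSpace B] (p : C(E, B)) :=
  {γ : C(I, E) // ∀ t, p (γ t) = p (γ 0)}

/-- The fibred product `E ×_B E`. -/
abbrev FibredProduct {E B : Type*} [TopologicalSpace E] [TopologicalSpace B] (p : C(E, B)) :=
  {x : E × E // p x.1 = p x.2}

/-- The parametrised endpoint map `Π : E^I_B → E ×_B E`, `γ ↦ (γ(0), γ(1))`. -/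
def piMap {E B : Type*} [TopologicalSpace E] [TopologicalSpace B] (p : C(E, B)) :
    C(FibrewisePath p, FibredProduct p) :=
  ⟨fun γ => ⟨(γ.1 0, γ.1 1), (γ.2 1).symm⟩,
    (Continuous.subtype_mk
      (((ContinuousEvalConst.continuous_eval_const 0).comp continuous_subtype_val).prodMk
        ((ContinuousEvalConst.continuous_eval_const 1).comp continuous_subtype_val)) _)⟩

/-- The parametrised topological complexity `TC[p : E → B] ≤ k`: the sectional category of the
parametrised endpoint map is at most `k`. -/
def ParamTCLE {E B : Type*} [TopologicalSpace E] [TopologicalSpace B] (p : C(E, B)) (k : ℕ) :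
    Prop :=
  SecatLE (piMap p) k

/-- The diagonal map `d : E → E ×_B E`, `e ↦ (e, e)`. -/
def diagMap {E B : Type*} [TopologicalSpace E] [TopologicalSpace B] (p : C(E, B)) :
    C(E, FibredProduct p) :=
  ⟨fun e => ⟨(e, e), rfl⟩, Continuous.subtype_mk (continuous_id.prodMk continuous_id) _⟩

/-- The map sending a point to the constant path at that point. -/
def constPathMap {E B : Type*} [TopologicalSpace E] [TopologicalSpace B] (p : C(E, B)) :
    C(E, FibrewisePath p) :=
  ⟨fun e => ⟨ContinuousMap.const I e, fun _ => rfl⟩,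
    Continuous.subtype_mk (ContinuousMap.continuous_const') _⟩

/-- Evaluation at `0` on fibrewise paths. -/
def evZero {E B : Type*} [TopologicalSpace E] [TopologicalSpace B] (p : C(E, B)) :
    C(FibrewisePath p, E) :=
  ⟨fun γ => γ.1 0,
    (ContinuousEvalConst.continuous_eval_const 0).comp continuous_subtype_val⟩

/-- `Π` is homotopic to `d ∘ ev₀`. -/
noncomputable def piHomotopy {E B : Type*} [TopologicalSpace E] [TopologicalSpace B]
    (p : C(E, B)) :
    ((diagMap p).comp (evZero p)).Homotopy (piMap p) where
  toFun := fun q => ⟨(q.2.1 0, q.2.1 q.1), (q.2.2 q.1).symm⟩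
  continuous_toFun := by
    apply Continuous.subtype_mk
    apply Continuous.prodMk
    · exact (ContinuousEvalConst.continuous_eval_const 0).comp
        (continuous_subtype_val.comp continuous_snd)
    · exact continuous_eval.comp
        (((continuous_subtype_val.comp continuous_snd)).prodMk continuous_fst)
  map_zero_left := fun γ => rfl
  map_one_left := fun γ => Subtype.ext (by simp [piMap])

/-- The parametrised topological complexity equals the sectional category of the diagonal
map `d : E → E ×_B E`. -/
theorem paramTCLE_iff_secatLE_diag {E B : Type*} [TopologicalSpace E] [TopologicalSpace B]
    (p : C(E, B)) (k : ℕ) :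
    ParamTCLE p k ↔ SecatLE (diagMap p) k := by
  constructor
  · rintro ⟨U, hopen, hcov, hsec⟩
    refine ⟨U, hopen, hcov, fun i => ?_⟩
    obtain ⟨s, hs⟩ := hsec i
    refine ⟨(evZero p).comp s, ?_⟩
    have h1 : ((piMap p).comp s).Homotopic (((diagMap p).comp (evZero p)).comp s) :=
      ContinuousMap.Homotopic.comp ⟨(piHomotopy p).symm⟩ (ContinuousMap.Homotopic.refl s)
    have h2 : ((diagMap p).comp ((evZero p).comp s)) =
        (((diagMap p).comp (evZero p)).comp s) := rfl
    exact h2 ▸ (h1.symm.trans hs)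
  · rintro ⟨U, hopen, hcov, hsec⟩
    refine ⟨U, hopen, hcov, fun i => ?_⟩
    obtain ⟨s, hs⟩ := hsec i
    refine ⟨(constPathMap p).comp s, ?_⟩
    have h2 : ((piMap p).comp ((constPathMap p).comp s)) = ((diagMap p).comp s) :=
      ContinuousMap.ext fun u => Subtype.ext rfl
    exact h2 ▸ hs
end
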